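/- Let Y = (Y_1,...,Y_k) be the urn sequence with the first w = ⌈λk⌉ draws without replacement and the rest with replacement, and let D = |{i : ∃ j ≠ i, Y_j = Y_i}|. Then E[D] ≥ k(1 − 1/e)(1 − λ − 1/k) whenever k ≥ 1 and λ + 1/k ≤ 1, where this lower bound may be replaced by max{k(1−1/e)(1−λ−1/k), 0} in general. -/

import Mathlib

open Finset

/-- Probability mass function of the urn sequence `Y ∈ [k]^k`: first `w` draws
without replacement from `[k]`, remaining `k - w` draws i.i.d. uniform on `[k]`. -/
noncomputable def urnPMF (k w : ℕ) : (Fin k → Fin k) → ℝ := fun y =>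
  if ∀ i j : Fin k, (i : ℕ) < w → (j : ℕ) < w → y i = y j → i = j then
    ((Nat.factorial (k - w) : ℝ) / (Nat.factorial k : ℝ)) * (1 / (k : ℝ)) ^ (k - w)
  else 0

namespace UrnAux

variable (k w : ℕ)

abbrev Lo := {i : Fin k // (i : ℕ) < w}
abbrev Hi := {i : Fin k // ¬ (i : ℕ) < w}
abbrev Inj := {g : Lo k w → Fin k // Function.Injective g}

def glue (g : Lo k w → Fin k) (h : Hi k w → Fin k) : Fin k → Fin k :=
  fun i => if hi : (i : ℕ) < w then g ⟨i, hi⟩ else h ⟨i, hi⟩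

lemma glue_lt (g : Lo k w → Fin k) (h : Hi k w → Fin k) (i : Fin k) (hi : (i : ℕ) < w) :
    glue k w g h i = g ⟨i, hi⟩ := dif_pos hi

lemma glue_ge (g : Lo k w → Fin k) (h : Hi k w → Fin k) (i : Fin k) (hi : ¬ (i : ℕ) < w) :
    glue k w g h i = h ⟨i, hi⟩ := dif_neg hi

lemma card_Lo (hwk : w ≤ k) : Fintype.card (Lo k w) = w := by
  have e : Lo k w ≃ Fin w :=
    ⟨fun a => ⟨a.1.1, a.2⟩, fun b => ⟨⟨b.1, lt_of_lt_of_le b.2 hwk⟩, b.2⟩,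
      fun a => rfl, fun b => rfl⟩
  rw [Fintype.card_congr e, Fintype.card_fin]

lemma card_Hi (hwk : w ≤ k) : Fintype.card (Hi k w) = k - w := by
  classical
  have := Fintype.card_subtype_compl (p := fun i : Fin k => (i : ℕ) < w)
  simp only [Fintype.card_fin] at this
  rw [this, card_Lo k w hwk]


lemma card_Inj (hwk : w ≤ k) : Fintype.card (Inj k w) = k.descFactorial w := by
  classical
  rw [Fintype.card_congr (Equiv.subtypeInjectiveEquivEmbedding (Lo k w) (Fin k))]
  rw [Fintype.card_embedding_eq, Fintype.card_fin, card_Lo k w hwk]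

/-- Predicate: the first `w` coordinates of `y` are pairwise distinct. -/
def Pblock (y : Fin k → Fin k) : Prop :=
  ∀ i j : Fin k, (i : ℕ) < w → (j : ℕ) < w → y i = y j → i = j

instance : DecidablePred (Pblock k w) := fun _ => by unfold Pblock; infer_instance

lemma glue_eta (y : Fin k → Fin k) :
    glue k w (fun a : Lo k w => y a.1) (fun b : Hi k w => y b.1) = y := by
  funext i
  by_cases hi : (i : ℕ) < w
  · rw [glue_lt k w _ _ i hi]
  · rw [glue_ge k w _ _ i hi]

lemma sum_glue {M : Type*} [AddCommMonoid M] (F : (Fin k → Fin k) → M) :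
    ∑ y ∈ univ.filter (Pblock k w), F y
      = ∑ p : Inj k w × (Hi k w → Fin k), F (glue k w p.1.1 p.2) := by
  classical
  refine Finset.sum_bij' (fun y hy => (⟨fun a => y a.1, ?_⟩, fun b => y b.1))
    (fun p _ => glue k w p.1.1 p.2) (fun y hy => mem_univ _) (fun p _ => ?_)
    (fun y hy => ?_) (fun p _ => ?_) (fun y hy => ?_)
  · intro a b hab
    have hP : Pblock k w y := (mem_filter.1 hy).2
    exact Subtype.ext (hP a.1 b.1 a.2 b.2 hab)
  · refine mem_filter.2 ⟨mem_univ _, fun i j hi hj hij => ?_⟩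
    rw [glue_lt k w _ _ i hi, glue_lt k w _ _ j hj] at hij
    have h2 := p.1.2 hij
    exact congrArg (fun a : Lo k w => a.1) h2
  · dsimp only
    exact glue_eta k w y
  · refine Prod.ext (Subtype.ext (funext fun a => ?_)) (funext fun b => ?_)
    · exact glue_lt k w _ _ a.1 a.2
    · exact glue_ge k w _ _ b.1 b.2
  · dsimp only
    exact (congrArg F (glue_eta k w y)).symm


lemma count_avoid (x : Fin k) :
    (univ.filter (fun h : Hi k w → Fin k => ∀ b, h b ≠ x)).card
      ≤ (k - 1) ^ (Fintype.card (Hi k w)) := by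
  classical
  have hsub : univ.filter (fun h : Hi k w → Fin k => ∀ b, h b ≠ x)
      ⊆ Fintype.piFinset (fun _ : Hi k w => univ.erase x) := by
    intro h hh
    rw [Fintype.mem_piFinset]
    intro b
    exact mem_erase.2 ⟨(mem_filter.1 hh).2 b, mem_univ _⟩
  refine (Finset.card_le_card hsub).trans (le_of_eq ?_)
  rw [Fintype.card_piFinset]
  rw [Finset.prod_const, card_erase_of_mem (mem_univ _), card_univ, Fintype.card_fin,
    card_univ]

lemma count_unique_hi (S : Finset (Fin k)) (i' : Hi k w) :
    (univ.filter (fun h : Hi k w → Fin k =>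
        h i' ∉ S ∧ ∀ b, b ≠ i' → h b ≠ h i')).card
      ≤ (k - S.card) * (k - 1) ^ (Fintype.card (Hi k w) - 1) := by
  classical
  have hsub : univ.filter (fun h : Hi k w → Fin k =>
        h i' ∉ S ∧ ∀ b, b ≠ i' → h b ≠ h i')
      ⊆ (univ \ S).biUnion (fun v => Fintype.piFinset
        (fun b : Hi k w => if b = i' then ({v} : Finset (Fin k)) else univ.erase v)) := by
    intro h hh
    rw [mem_filter] at hh
    refine mem_biUnion.2 ⟨h i', mem_sdiff.2 ⟨mem_univ _, hh.2.1⟩,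
      Fintype.mem_piFinset.2 fun b => ?_⟩
    by_cases hb : b = i'
    · subst hb; rw [if_pos rfl]; exact mem_singleton_self _
    · rw [if_neg hb]; exact mem_erase.2 ⟨hh.2.2 b hb, mem_univ _⟩
  refine (Finset.card_le_card hsub).trans (Finset.card_biUnion_le.trans ?_)
  have hcard : ∀ v : Fin k, (Fintype.piFinset
      (fun b : Hi k w => if b = i' then ({v} : Finset (Fin k)) else univ.erase v)).card
      = (k - 1) ^ (Fintype.card (Hi k w) - 1) := by
    intro v
    rw [Fintype.card_piFinset, ← Finset.mul_prod_erase univ _ (mem_univ i'),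
      if_pos rfl, card_singleton, one_mul]
    have hc : ∀ b ∈ univ.erase i',
        (if b = i' then ({v} : Finset (Fin k)) else univ.erase v).card = k - 1 := by
      intro b hb
      rw [if_neg (mem_erase.1 hb).1, card_erase_of_mem (mem_univ _), card_univ,
        Fintype.card_fin]
    rw [Finset.prod_congr rfl hc, Finset.prod_const, card_erase_of_mem (mem_univ _),
      card_univ]
  calc ∑ v ∈ univ \ S, (Fintype.piFinset
        (fun b : Hi k w => if b = i' then ({v} : Finset (Fin k)) else univ.erase v)).card
      = ∑ _v ∈ univ \ S, (k - 1) ^ (Fintype.card (Hi k w) - 1) :=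
        Finset.sum_congr rfl (fun v _ => hcard v)
    _ = (univ \ S).card * (k - 1) ^ (Fintype.card (Hi k w) - 1) := by
        rw [Finset.sum_const, smul_eq_mul]
    _ ≤ (k - S.card) * (k - 1) ^ (Fintype.card (Hi k w) - 1) := by
        apply Nat.mul_le_mul_right
        rw [Finset.card_sdiff_of_subset (Finset.subset_univ S), card_univ, Fintype.card_fin]

lemma count_main (hwk : w ≤ k) :
    ∑ p : Inj k w × (Hi k w → Fin k),
        (univ.filter (fun i : Fin k =>
          ¬ ∃ j, j ≠ i ∧ glue k w p.1.1 p.2 j = glue k w p.1.1 p.2 i)).card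
      ≤ w * (k.descFactorial w * (k - 1) ^ (k - w))
        + (k - w) * (k.descFactorial w * ((k - w) * (k - 1) ^ (k - w - 1))) := by
  classical
  have key : ∀ i : Fin k, (∑ p : Inj k w × (Hi k w → Fin k),
      if ¬ ∃ j, j ≠ i ∧ glue k w p.1.1 p.2 j = glue k w p.1.1 p.2 i then 1 else 0)
      ≤ if (i : ℕ) < w then k.descFactorial w * (k - 1) ^ (k - w)
        else k.descFactorial w * ((k - w) * (k - 1) ^ (k - w - 1)) := by
    intro i
    rw [Fintype.sum_prod_type]
    by_cases hi : (i : ℕ) < w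
    · rw [if_pos hi]
      have hg : ∀ g : Inj k w, (∑ h : Hi k w → Fin k,
          if ¬ ∃ j, j ≠ i ∧ glue k w g.1 h j = glue k w g.1 h i then 1 else 0)
          ≤ (k - 1) ^ (k - w) := by
        intro g
        have mono : ∀ h : Hi k w → Fin k,
            (if ¬ ∃ j, j ≠ i ∧ glue k w g.1 h j = glue k w g.1 h i then (1:ℕ) else 0)
            ≤ (if ∀ b : Hi k w, h b ≠ g.1 ⟨i, hi⟩ then 1 else 0) := by
          intro h
          by_cases h1 : ¬ ∃ j, j ≠ i ∧ glue k w g.1 h j = glue k w g.1 h i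
          · rw [if_pos h1, if_pos]
            intro b heq
            refine h1 ⟨b.1, fun he => b.2 (he ▸ hi), ?_⟩
            rw [glue_ge k w _ _ b.1 b.2, glue_lt k w _ _ i hi]
            exact heq
          · rw [if_neg h1]
            exact Nat.zero_le _
        refine (Finset.sum_le_sum (fun h _ => mono h)).trans ?_
        rw [← Finset.card_filter]
        exact (count_avoid k w _).trans (le_of_eq (by rw [card_Hi k w hwk]))
      calc ∑ g : Inj k w, (∑ h : Hi k w → Fin k,
            if ¬ ∃ j, j ≠ i ∧ glue k w g.1 h j = glue k w g.1 h i then 1 else 0)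
          ≤ ∑ _g : Inj k w, (k - 1) ^ (k - w) := Finset.sum_le_sum (fun g _ => hg g)
        _ = k.descFactorial w * (k - 1) ^ (k - w) := by
            rw [Finset.sum_const, card_univ, card_Inj k w hwk, smul_eq_mul]
    · rw [if_neg hi]
      have hg : ∀ g : Inj k w, (∑ h : Hi k w → Fin k,
          if ¬ ∃ j, j ≠ i ∧ glue k w g.1 h j = glue k w g.1 h i then 1 else 0)
          ≤ (k - w) * (k - 1) ^ (k - w - 1) := by
        intro g
        have mono : ∀ h : Hi k w → Fin k,
            (if ¬ ∃ j, j ≠ i ∧ glue k w g.1 h j = glue k w g.1 h i then (1:ℕ) else 0)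
            ≤ (if h ⟨i, hi⟩ ∉ Finset.image g.1 univ ∧
                ∀ b, b ≠ (⟨i, hi⟩ : Hi k w) → h b ≠ h ⟨i, hi⟩ then 1 else 0) := by
          intro h
          by_cases h1 : ¬ ∃ j, j ≠ i ∧ glue k w g.1 h j = glue k w g.1 h i
          · rw [if_pos h1, if_pos]
            constructor
            · intro hmem
              obtain ⟨a, _, ha⟩ := Finset.mem_image.1 hmem
              refine h1 ⟨a.1, fun he => hi (he ▸ a.2), ?_⟩
              rw [glue_lt k w _ _ a.1 a.2, glue_ge k w _ _ i hi]
              exact ha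
            · intro b hb heq
              refine h1 ⟨b.1, fun he => hb (Subtype.ext he), ?_⟩
              rw [glue_ge k w _ _ b.1 b.2, glue_ge k w _ _ i hi]
              exact heq
          · rw [if_neg h1]
            exact Nat.zero_le _
        refine (Finset.sum_le_sum (fun h _ => mono h)).trans ?_
        rw [← Finset.card_filter]
        refine (count_unique_hi k w _ _).trans (le_of_eq ?_)
        rw [card_Hi k w hwk, Finset.card_image_of_injective univ g.2, card_univ,
          card_Lo k w hwk]
      calc ∑ g : Inj k w, (∑ h : Hi k w → Fin k,
            if ¬ ∃ j, j ≠ i ∧ glue k w g.1 h j = glue k w g.1 h i then 1 else 0)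
          ≤ ∑ _g : Inj k w, (k - w) * (k - 1) ^ (k - w - 1) :=
            Finset.sum_le_sum (fun g _ => hg g)
        _ = k.descFactorial w * ((k - w) * (k - 1) ^ (k - w - 1)) := by
            rw [Finset.sum_const, card_univ, card_Inj k w hwk, smul_eq_mul]
  calc ∑ p : Inj k w × (Hi k w → Fin k),
        (univ.filter (fun i : Fin k =>
          ¬ ∃ j, j ≠ i ∧ glue k w p.1.1 p.2 j = glue k w p.1.1 p.2 i)).card
      = ∑ p : Inj k w × (Hi k w → Fin k), ∑ i : Fin k,
          if ¬ ∃ j, j ≠ i ∧ glue k w p.1.1 p.2 j = glue k w p.1.1 p.2 i then 1 else 0 := by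
        refine Finset.sum_congr rfl (fun p _ => ?_)
        rw [Finset.card_filter]
    _ = ∑ i : Fin k, ∑ p : Inj k w × (Hi k w → Fin k),
          if ¬ ∃ j, j ≠ i ∧ glue k w p.1.1 p.2 j = glue k w p.1.1 p.2 i then 1 else 0 :=
        Finset.sum_comm
    _ ≤ ∑ i : Fin k, (if (i : ℕ) < w then k.descFactorial w * (k - 1) ^ (k - w)
          else k.descFactorial w * ((k - w) * (k - 1) ^ (k - w - 1))) :=
        Finset.sum_le_sum (fun i _ => key i)
    _ = w * (k.descFactorial w * (k - 1) ^ (k - w))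
        + (k - w) * (k.descFactorial w * ((k - w) * (k - 1) ^ (k - w - 1))) := by
        have h1 : (univ.filter (fun i : Fin k => (i : ℕ) < w)).card = w :=
          (Fintype.card_subtype _).symm.trans (card_Lo k w hwk)
        have h2 : (univ.filter (fun i : Fin k => ¬ (i : ℕ) < w)).card = k - w :=
          (Fintype.card_subtype _).symm.trans (card_Hi k w hwk)
        rw [Finset.sum_ite, Finset.sum_const, Finset.sum_const, smul_eq_mul, smul_eq_mul,
          h1, h2]

end UrnAux

open UrnAux in
lemma expect_ge (k w : ℕ) (hk : 1 ≤ k) (hwk : w < k) :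
    ∑ y : Fin k → Fin k, urnPMF k w y *
        ((Finset.univ.filter (fun i => ∃ j, j ≠ i ∧ y j = y i)).card : ℝ)
      ≥ (k : ℝ) - (w : ℝ) * (((k : ℝ) - 1) / k) ^ (k - w)
        - (((k - w : ℕ) : ℝ)) ^ 2 / k * (((k : ℝ) - 1) / k) ^ (k - w - 1) := by
  classical
  have hwk' : w ≤ k := hwk.le
  have hK0 : (0:ℝ) < (k:ℝ) := by exact_mod_cast hk
  set c : ℝ := ((Nat.factorial (k - w) : ℝ) / (Nat.factorial k : ℝ)) * (1 / (k : ℝ)) ^ (k - w)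
    with hc
  have hc0 : 0 ≤ c := by positivity
  have hpmf_pos : ∀ y, Pblock k w y → urnPMF k w y = c := fun y hy => if_pos hy
  have hpmf_neg : ∀ y, ¬ Pblock k w y → urnPMF k w y = 0 := fun y hy => if_neg hy
  have hsplit : ∑ y : Fin k → Fin k, urnPMF k w y *
      ((univ.filter (fun i => ∃ j, j ≠ i ∧ y j = y i)).card : ℝ)
      = ∑ y ∈ univ.filter (Pblock k w),
          c * ((univ.filter (fun i => ∃ j, j ≠ i ∧ y j = y i)).card : ℝ) := by
    rw [← Finset.sum_filter_add_sum_filter_not univ (Pblock k w)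
      (fun y => urnPMF k w y * ((univ.filter (fun i => ∃ j, j ≠ i ∧ y j = y i)).card : ℝ))]
    have h2 : ∑ y ∈ univ.filter (fun y => ¬ Pblock k w y), urnPMF k w y *
        ((univ.filter (fun i => ∃ j, j ≠ i ∧ y j = y i)).card : ℝ) = 0 :=
      Finset.sum_eq_zero fun y hy => by
        rw [hpmf_neg y (mem_filter.1 hy).2, zero_mul]
    rw [h2, add_zero]
    exact Finset.sum_congr rfl fun y hy => by rw [hpmf_pos y (mem_filter.1 hy).2]
  have hDU : ∀ y : Fin k → Fin k,
      ((univ.filter (fun i => ∃ j, j ≠ i ∧ y j = y i)).card : ℝ)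
      = (k : ℝ) - ((univ.filter (fun i => ¬ ∃ j, j ≠ i ∧ y j = y i)).card : ℝ) := by
    intro y
    have h := Finset.card_filter_add_card_filter_not
      (s := (univ : Finset (Fin k))) (p := fun i => ∃ j, j ≠ i ∧ y j = y i)
    rw [card_univ, Fintype.card_fin] at h
    have h' : (((univ.filter (fun i => ∃ j, j ≠ i ∧ y j = y i)).card : ℝ)
        + ((univ.filter (fun i => ¬ ∃ j, j ≠ i ∧ y j = y i)).card : ℝ)) = (k : ℝ) := by
      exact_mod_cast congrArg (fun n : ℕ => (n : ℝ)) h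
    linarith
  have hA : (univ.filter (Pblock k w)).card = k.descFactorial w * k ^ (k - w) := by
    have h1 := sum_glue k w (fun _ => (1 : ℕ))
    rw [Finset.sum_const, smul_eq_mul, mul_one, Finset.sum_const, smul_eq_mul, mul_one,
      card_univ] at h1
    rw [h1, Fintype.card_prod, card_Inj k w hwk', Fintype.card_fun, Fintype.card_fin,
      card_Hi k w hwk']
  have hU : ∑ y ∈ univ.filter (Pblock k w),
      ((univ.filter (fun i => ¬ ∃ j, j ≠ i ∧ y j = y i)).card : ℝ)
      ≤ ((w * (k.descFactorial w * (k - 1) ^ (k - w))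
        + (k - w) * (k.descFactorial w * ((k - w) * (k - 1) ^ (k - w - 1))) : ℕ) : ℝ) := by
    have h1 : (∑ y ∈ univ.filter (Pblock k w),
        (univ.filter (fun i => ¬ ∃ j, j ≠ i ∧ y j = y i)).card)
        = ∑ p : Inj k w × (Hi k w → Fin k), (univ.filter (fun i =>
            ¬ ∃ j, j ≠ i ∧ glue k w p.1.1 p.2 j = glue k w p.1.1 p.2 i)).card :=
      sum_glue k w _
    rw [← Nat.cast_sum]
    exact_mod_cast h1 ▸ count_main k w hwk'
  rw [hsplit]
  -- abbreviations
  have hd0 : (0:ℝ) < (k.descFactorial w : ℝ) := by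
    have : k.descFactorial w ≠ 0 := by
      rw [Ne, Nat.descFactorial_eq_zero_iff_lt]; omega
    exact_mod_cast Nat.pos_of_ne_zero this
  have hfac : ((k - w).factorial : ℝ) * (k.descFactorial w : ℝ) = (k.factorial : ℝ) := by
    exact_mod_cast Nat.factorial_mul_descFactorial hwk'
  have hkfac : (k.factorial : ℝ) ≠ 0 := by
    exact_mod_cast k.factorial_pos.ne'
  have hcd : c * (k.descFactorial w : ℝ) = 1 / (k : ℝ) ^ (k - w) := by
    have e : c * (k.descFactorial w : ℝ)
        = (((k - w).factorial : ℝ) * (k.descFactorial w : ℝ)) / (k.factorial : ℝ)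
          * (1 / (k : ℝ)) ^ (k - w) := by rw [hc]; ring
    rw [e, hfac, div_self hkfac, one_mul, div_pow, one_pow]
  have hKM : (0:ℝ) < (k:ℝ) ^ (k - w) := by positivity
  have step : ∑ y ∈ univ.filter (Pblock k w),
      c * ((univ.filter (fun i => ∃ j, j ≠ i ∧ y j = y i)).card : ℝ)
      = ∑ y ∈ univ.filter (Pblock k w),
          (c * (k:ℝ) - c * ((univ.filter (fun i => ¬ ∃ j, j ≠ i ∧ y j = y i)).card : ℝ)) :=
    Finset.sum_congr rfl fun y _ => by rw [hDU y]; ring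
  rw [step, Finset.sum_sub_distrib, Finset.sum_const, nsmul_eq_mul, ← Finset.mul_sum]
  -- now bound
  have hUb : c * ∑ y ∈ univ.filter (Pblock k w),
      ((univ.filter (fun i => ¬ ∃ j, j ≠ i ∧ y j = y i)).card : ℝ)
      ≤ c * ((w * (k.descFactorial w * (k - 1) ^ (k - w))
        + (k - w) * (k.descFactorial w * ((k - w) * (k - 1) ^ (k - w - 1))) : ℕ) : ℝ) :=
    mul_le_mul_of_nonneg_left hU hc0
  have hM1 : k - w = (k - w - 1) + 1 := by omega
  have hcast1 : ((k - 1 : ℕ) : ℝ) = (k : ℝ) - 1 := by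
    have := Nat.cast_sub hk (R := ℝ); simpa using this
  have hcast2 : ((k - w : ℕ) : ℝ) = (k : ℝ) - (w : ℝ) := by
    exact_mod_cast Nat.cast_sub hwk' (R := ℝ)
  have e1 : ((univ.filter (Pblock k w)).card : ℝ) * (c * k) = (k : ℝ) := by
    rw [hA]
    push_cast
    have e : ((k.descFactorial w : ℝ) * (k:ℝ) ^ (k - w)) * (c * (k:ℝ))
        = (c * (k.descFactorial w : ℝ)) * ((k:ℝ) ^ (k - w) * (k:ℝ)) := by ring
    rw [e, hcd]
    field_simp
  have e2 : c * ((w * (k.descFactorial w * (k - 1) ^ (k - w))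
        + (k - w) * (k.descFactorial w * ((k - w) * (k - 1) ^ (k - w - 1))) : ℕ) : ℝ)
      = (w : ℝ) * (((k : ℝ) - 1) / k) ^ (k - w)
        + (((k - w : ℕ) : ℝ)) ^ 2 / k * (((k : ℝ) - 1) / k) ^ (k - w - 1) := by
    push_cast [hcast1, hcast2]
    have e : c * ((w : ℝ) * ((k.descFactorial w : ℝ) * ((k:ℝ) - 1) ^ (k - w))
          + ((k:ℝ) - w) * ((k.descFactorial w : ℝ) * (((k:ℝ) - w) * ((k:ℝ) - 1) ^ (k - w - 1))))
        = (c * (k.descFactorial w : ℝ)) * ((w : ℝ) * ((k:ℝ) - 1) ^ (k - w))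
          + (c * (k.descFactorial w : ℝ)) * (((k:ℝ) - w) ^ 2 * ((k:ℝ) - 1) ^ (k - w - 1)) := by
      ring
    rw [e, hcd]
    rw [div_pow, div_pow]
    rw [hM1, pow_succ ((k:ℝ)) (k - w - 1), pow_succ (((k:ℝ) - 1)) (k - w - 1)]
    simp only [Nat.add_sub_cancel]
    ring
  rw [e1]
  have := sub_le_sub_left (hUb.trans (le_of_eq e2)) (k : ℝ)
  calc (k:ℝ) - c * ∑ y ∈ univ.filter (Pblock k w),
        ((univ.filter (fun i => ¬ ∃ j, j ≠ i ∧ y j = y i)).card : ℝ)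
      ≥ (k:ℝ) - ((w : ℝ) * (((k : ℝ) - 1) / k) ^ (k - w)
          + (((k - w : ℕ) : ℝ)) ^ 2 / k * (((k : ℝ) - 1) / k) ^ (k - w - 1)) := this
    _ = (k : ℝ) - (w : ℝ) * (((k : ℝ) - 1) / k) ^ (k - w)
        - (((k - w : ℕ) : ℝ)) ^ 2 / k * (((k : ℝ) - 1) / k) ^ (k - w - 1) := by ring

lemma analytic_zero (k : ℕ) (hk : 1 ≤ k) :
    (k:ℝ) - (k:ℝ) * (((k:ℝ) - 1) / k) ^ (k - 1)
      ≥ ((k:ℝ) - 1) * (1 - 1 / Real.exp 1) := by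
  have hK0 : (0:ℝ) < (k:ℝ) := by exact_mod_cast hk
  have hK1 : (1:ℝ) ≤ (k:ℝ) := by exact_mod_cast hk
  set K := (k:ℝ)
  set E := Real.exp 1 with hEdef
  set EK := Real.exp (1/K) with hEKdef
  have hE0 : (0:ℝ) < E := Real.exp_pos 1
  have hEK0 : (0:ℝ) < EK := Real.exp_pos _
  have hK1' : (1:ℝ) ≤ K := by linarith [hK0]
  set q : ℝ := (K - 1)/K with hqdef
  have hq0 : 0 ≤ q := by rw [hqdef]; apply div_nonneg <;> linarith
  have hq_eq : q = 1 - 1/K := by rw [hqdef]; field_simp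
  -- q ^ (k-1) ≤ EK / E
  have hqe : q ≤ Real.exp (-(1/K)) := by
    have := Real.add_one_le_exp (-(1/K))
    rw [hq_eq]; linarith
  have hpow : q ^ (k-1) ≤ EK / E := by
    calc q ^ (k-1) ≤ (Real.exp (-(1/K))) ^ (k-1) := pow_le_pow_left₀ hq0 hqe _
      _ = Real.exp (((k-1:ℕ):ℝ) * (-(1/K))) := (Real.exp_nat_mul _ _).symm
      _ = Real.exp (1/K - 1) := by
          congr 1
          rw [Nat.cast_sub hk]
          push_cast
          field_simp
          show -((k:ℝ) - 1) = 1 - (k:ℝ)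
          ring
      _ = EK / E := Real.exp_sub _ _
  -- convexity : EK ≤ 1 - 1/K + (1/K)*E
  have hconv : EK ≤ 1 - 1/K + (1/K) * E := by
    have h1 : (0:ℝ) ≤ 1 - 1/K := by
      have : 1/K ≤ 1 := by rw [div_le_one hK0]; exact hK1
      linarith
    have h2 : (0:ℝ) ≤ 1/K := by positivity
    have hcx := convexOn_exp.2 (Set.mem_univ (0:ℝ)) (Set.mem_univ (1:ℝ)) h1 h2 (by ring)
    rw [hEKdef, hEdef]
    simpa [smul_eq_mul, one_div] using hcx
  have hKEK : K * EK ≤ K - 1 + E := by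
    have e : K * (1 - 1/K + (1/K) * E) = K - 1 + E := by field_simp
    calc K * EK ≤ K * (1 - 1/K + (1/K) * E) := by gcongr
      _ = K - 1 + E := e
  have h2 : K * q ^ (k-1) ≤ K * (EK / E) := by gcongr
  have h3 : K * (EK / E) = (K * EK) / E := by ring
  have h4 : (K * EK) / E ≤ (K - 1 + E) / E := by gcongr
  have h5 : ((K:ℝ) - 1) * (1 - 1/E) = K - (K - 1 + E)/E := by field_simp; ring
  linarith

lemma analytic_pos (k w : ℕ) (hw1 : 1 ≤ w) (hwk : w < k) :
    (k : ℝ) - (w : ℝ) * (((k : ℝ) - 1) / k) ^ (k - w)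
      - (((k - w : ℕ) : ℝ)) ^ 2 / k * (((k : ℝ) - 1) / k) ^ (k - w - 1)
      ≥ ((k - w : ℕ) : ℝ) * (1 - 1 / Real.exp 1) := by
  have hk : 1 ≤ k := le_trans hw1 hwk.le
  have hK0 : (0:ℝ) < (k:ℝ) := by exact_mod_cast hk
  have hK2 : (2:ℝ) ≤ (k:ℝ) := by exact_mod_cast (by omega : 2 ≤ k)
  set K := (k:ℝ)
  set W := (w:ℝ) with hWdef
  set M := ((k - w : ℕ) : ℝ) with hMdef
  have hW1 : (1:ℝ) ≤ W := by rw [hWdef]; exact_mod_cast hw1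
  have hM1 : (1:ℝ) ≤ M := by
    rw [hMdef]; exact_mod_cast (by omega : 1 ≤ k - w)
  have hKWM : M = K - W := by
    rw [hMdef]; push_cast [Nat.cast_sub hwk.le]; ring
  have hMle : M ≤ K - 1 := by rw [hKWM]; linarith
  set E := Real.exp 1 with hEdef
  set EK := Real.exp (1/K) with hEKdef
  have hE0 : (0:ℝ) < E := Real.exp_pos 1
  have hEK0 : (0:ℝ) < EK := Real.exp_pos _
  have hK1' : (1:ℝ) ≤ K := by linarith [hK0]
  set q : ℝ := (K - 1)/K with hqdef
  have hq0 : 0 ≤ q := by rw [hqdef]; apply div_nonneg <;> linarith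
  have hq_eq : q = 1 - 1/K := by rw [hqdef]; field_simp
  have hq1 : q ≤ 1 := by
    rw [hq_eq]
    have h0 : 0 < 1/K := by positivity
    linarith
  -- (f3) Bernoulli : M/K ≤ q^w
  have f3 : M/K ≤ q ^ w := by
    have h1k : 1/K ≤ 1 := by rw [div_le_one hK0]; linarith
    have hber := one_add_mul_le_pow (a := -(1/K)) (by linarith : (-2:ℝ) ≤ -(1/K)) w
    have e1 : (1:ℝ) + -(1/K) = q := by rw [hq_eq]; ring
    have e2 : M/K = 1 - W/K := by
      rw [hKWM]; field_simp
    have e3 : (1:ℝ) + (w:ℝ) * -(1/K) = 1 - W/K := by rw [hWdef]; ring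
    rw [e1, e3] at hber
    linarith [hber]
  -- (f4) : q^(k-w) * (K + M) ≤ K
  have f4 : q ^ (k - w) * (K + M) ≤ K := by
    have h0k : (0:ℝ) < 1/K := by positivity
    have hber := one_add_mul_le_pow (a := (1/K)) (by linarith : (-2:ℝ) ≤ 1/K) (k - w)
    have hb2 : 1 + M/K ≤ (1 + 1/K) ^ (k - w) := by
      have : (((k-w:ℕ)):ℝ) * (1/K) = M/K := by rw [hMdef]; ring
      rw [this] at hber
      exact hber
    have hb3 : q * (1 + 1/K) ≤ 1 := by
      have e : q * (1 + 1/K) = 1 - 1/K^2 := by rw [hqdef]; field_simp; ring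
      rw [e]
      have : 0 < 1/K^2 := by positivity
      linarith
    have hb4 : (0:ℝ) ≤ q * (1 + 1/K) := by
      apply mul_nonneg hq0; positivity
    have hb5 : (q * (1 + 1/K)) ^ (k - w) ≤ 1 := pow_le_one₀ hb4 hb3
    have hb6 : q ^ (k-w) * (1 + M/K) ≤ 1 := by
      calc q ^ (k-w) * (1 + M/K) ≤ q ^ (k-w) * (1 + 1/K) ^ (k-w) := by
            have hqkw : (0:ℝ) ≤ q ^ (k-w) := pow_nonneg hq0 _
            exact mul_le_mul_of_nonneg_left hb2 hqkw
        _ = (q * (1 + 1/K)) ^ (k-w) := (mul_pow _ _ _).symm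
        _ ≤ 1 := hb5
    have e : q ^ (k-w) * (K + M) = (q ^ (k-w) * (1 + M/K)) * K := by field_simp
    rw [e]
    have h7 := mul_le_mul_of_nonneg_right hb6 hK0.le
    linarith [h7]
  -- q^(k-1) ≤ EK/E
  have hqe : q ≤ Real.exp (-(1/K)) := by
    have := Real.add_one_le_exp (-(1/K))
    rw [hq_eq]; linarith
  have hqk1 : q ^ (k-1) ≤ EK / E := by
    calc q ^ (k-1) ≤ (Real.exp (-(1/K))) ^ (k-1) := pow_le_pow_left₀ hq0 hqe _
      _ = Real.exp (((k-1:ℕ):ℝ) * (-(1/K))) := (Real.exp_nat_mul _ _).symm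
      _ = Real.exp (1/K - 1) := by
          congr 1
          rw [Nat.cast_sub hk]
          push_cast
          field_simp
          show -((k:ℝ) - 1) = 1 - (k:ℝ)
          ring
      _ = EK / E := Real.exp_sub _ _
  -- (s1)(s2) : M^2/K * q^(k-w-1) ≤ M * (EK/E)
  have hsplitpow : q ^ w * q ^ (k - w - 1) = q ^ (k-1) := by
    rw [← pow_add]
    congr 1
    omega
  have s4 : M^2/K * q ^ (k-w-1) ≤ M * (EK/E) := by
    have hq1' : 0 ≤ q ^ (k-w-1) := pow_nonneg hq0 _
    calc M^2/K * q ^ (k-w-1) = (M * q ^ (k-w-1)) * (M/K) := by ring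
      _ ≤ (M * q ^ (k-w-1)) * q ^ w := by
          apply mul_le_mul_of_nonneg_left f3
          positivity
      _ = M * (q ^ w * q ^ (k-w-1)) := by ring
      _ = M * q ^ (k-1) := by rw [hsplitpow]
      _ ≤ M * (EK/E) := by
          apply mul_le_mul_of_nonneg_left hqk1
          linarith
  -- (s5) : EK ≤ 1 + EK/K
  have f5 : (1 - 1/K) * EK ≤ 1 := by
    have h := Real.add_one_le_exp (-(1/K))
    have he : Real.exp (-(1/K)) * EK = 1 := by
      rw [hEKdef, ← Real.exp_add]; simp
    have h2 : 1 - 1/K ≤ Real.exp (-(1/K)) := by linarith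
    calc (1 - 1/K) * EK ≤ Real.exp (-(1/K)) * EK := mul_le_mul_of_nonneg_right h2 hEK0.le
      _ = 1 := he
  have s5 : EK ≤ 1 + EK/K := by
    have e : (1 - 1/K) * EK = EK - EK/K := by ring
    rw [e] at f5
    linarith
  -- (f6) : (2 - 1/K) * EK ≤ E
  have f6 : (2 - 1/K) * EK ≤ E := by
    have h := Real.add_one_le_exp (1 - 1/K)
    have he : Real.exp (1 - 1/K) * EK = E := by
      rw [hEKdef, hEdef, ← Real.exp_add]; congr 1; ring
    have h2 : 2 - 1/K ≤ Real.exp (1 - 1/K) := by linarith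
    calc (2 - 1/K) * EK ≤ Real.exp (1 - 1/K) * EK := mul_le_mul_of_nonneg_right h2 hEK0.le
      _ = E := he
  -- (s7) : M*EK/(E*K) ≤ M/(K+M)
  have t1 : EK * (K + M) ≤ K * E := by
    have h1 : K + M ≤ 2*K - 1 := by linarith
    have h2 : EK * (K + M) ≤ EK * (2*K - 1) := by
      apply mul_le_mul_of_nonneg_left h1 hEK0.le
    have h3 : EK * (2*K - 1) = K * ((2 - 1/K) * EK) := by field_simp
    have h4 : K * ((2 - 1/K) * EK) ≤ K * E := by gcongr
    linarith
  have s7 : M * EK / (E * K) ≤ M / (K + M) := by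
    rw [div_le_div_iff₀ (by exact mul_pos hE0 hK0) (by linarith : (0:ℝ) < K + M)]
    have h0 : (0:ℝ) ≤ M := by linarith
    have h5 := mul_le_mul_of_nonneg_left t1 h0
    linarith [h5]
  -- (s6)
  have s6 : M * (EK/E) ≤ M/E + M * EK / (E * K) := by
    have h1 : M * (EK/E) = (M/E) * EK := by ring
    have h2 : (M/E) * EK ≤ (M/E) * (1 + EK/K) := by
      apply mul_le_mul_of_nonneg_left s5
      exact div_nonneg (by linarith) hE0.le
    have h3 : (M/E) * (1 + EK/K) = M/E + M * EK / (E * K) := by ring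
    linarith
  -- (s8) : M/(K+M) ≤ W * (1 - q^(k-w))
  have s8 : M/(K + M) ≤ W * (1 - q ^ (k-w)) := by
    have hqm1 : q ^ (k-w) ≤ 1 := pow_le_one₀ hq0 hq1
    have h1 : M/(K+M) ≤ 1 - q ^ (k-w) := by
      rw [div_le_iff₀ (by linarith : (0:ℝ) < K + M)]
      have e : (1 - q ^ (k-w)) * (K+M) = (K+M) - q ^ (k-w) * (K+M) := by ring
      rw [e]
      linarith [f4]
    have h2 : 1 - q ^ (k-w) ≤ W * (1 - q ^ (k-w)) := by
      have h3 := mul_le_mul_of_nonneg_right hW1 (by linarith : (0:ℝ) ≤ 1 - q ^ (k-w))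
      linarith [h3]
    linarith
  -- combine
  have chain : M^2/K * q ^ (k-w-1) ≤ M/E + W * (1 - q ^ (k-w)) := by
    calc M^2/K * q ^ (k-w-1) ≤ M * (EK/E) := s4
      _ ≤ M/E + M * EK / (E * K) := s6
      _ ≤ M/E + M/(K+M) := by linarith [s7]
      _ ≤ M/E + W * (1 - q ^ (k-w)) := by linarith [s8]
  have hfin : M * (1 - 1/E) = M - M/E := by ring
  rw [ge_iff_le, hfin]
  have hKsum : K = W + M := by rw [hKWM]; ring
  linarith [chain]

/-- For the urn sequence with `w = ⌈λk⌉`, the expected number `E[D]` of coordinates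
involved in a collision satisfies `E[D] ≥ k(1 − 1/e)(1 − λ − 1/k)` when
`λ + 1/k ≤ 1`, and `E[D] ≥ max{k(1 − 1/e)(1 − λ − 1/k), 0}` in general. -/
theorem stmt18 (k : ℕ) (hk : 1 ≤ k) (l : ℝ) (hl0 : 0 ≤ l) (hl1 : l ≤ 1) :
    (l + 1 / (k : ℝ) ≤ 1 →
      ∑ y : Fin k → Fin k, urnPMF k ⌈l * (k : ℝ)⌉₊ y *
          ((Finset.univ.filter (fun i => ∃ j, j ≠ i ∧ y j = y i)).card : ℝ)
        ≥ (k : ℝ) * (1 - 1 / Real.exp 1) * (1 - l - 1 / (k : ℝ)))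
    ∧ ∑ y : Fin k → Fin k, urnPMF k ⌈l * (k : ℝ)⌉₊ y *
          ((Finset.univ.filter (fun i => ∃ j, j ≠ i ∧ y j = y i)).card : ℝ)
        ≥ max ((k : ℝ) * (1 - 1 / Real.exp 1) * (1 - l - 1 / (k : ℝ))) 0 := by
  have hK0 : (0:ℝ) < (k:ℝ) := by exact_mod_cast hk
  have hE0 : (0:ℝ) < Real.exp 1 := Real.exp_pos 1
  have hE2 : (2:ℝ) ≤ Real.exp 1 := by
    have := Real.add_one_le_exp 1
    linarith
  have hEfrac : (0:ℝ) ≤ 1 - 1 / Real.exp 1 := by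
    have h1 : 1 / Real.exp 1 ≤ 1 := by
      rw [div_le_one hE0]; linarith
    linarith
  have nonneg : 0 ≤ ∑ y : Fin k → Fin k, urnPMF k ⌈l * (k : ℝ)⌉₊ y *
      ((Finset.univ.filter (fun i => ∃ j, j ≠ i ∧ y j = y i)).card : ℝ) := by
    apply Finset.sum_nonneg
    intro y _
    apply mul_nonneg _ (Nat.cast_nonneg _)
    unfold urnPMF
    split_ifs
    · positivity
    · exact le_refl 0
  set w := ⌈l * (k : ℝ)⌉₊ with hwdef
  have part1 : l + 1 / (k : ℝ) ≤ 1 →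
      ∑ y : Fin k → Fin k, urnPMF k w y *
          ((Finset.univ.filter (fun i => ∃ j, j ≠ i ∧ y j = y i)).card : ℝ)
        ≥ (k : ℝ) * (1 - 1 / Real.exp 1) * (1 - l - 1 / (k : ℝ)) := by
    intro hsum
    have hKK : (k:ℝ) * (1/(k:ℝ)) = 1 := mul_one_div_cancel hK0.ne'
    have hlk : l * (k:ℝ) ≤ (k:ℝ) - 1 := by
      have h := mul_le_mul_of_nonneg_right hsum hK0.le
      rw [add_mul] at h
      have e : 1 / (k:ℝ) * (k:ℝ) = 1 := by field_simp
      rw [e] at h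
      nlinarith [h]
    have hcastk1 : ((k - 1 : ℕ) : ℝ) = (k:ℝ) - 1 := by
      push_cast [Nat.cast_sub hk]
      ring
    have hwk : w < k := by
      have h1 : w ≤ k - 1 := by
        rw [hwdef]
        apply Nat.ceil_le.2
        rw [hcastk1]
        exact hlk
      omega
    have hE := expect_ge k w hk hwk
    by_cases hw0 : w = 0
    · have hl00 : l = 0 := by
        have h1 : l * (k:ℝ) ≤ 0 := by
          have := Nat.ceil_eq_zero.1 (hwdef ▸ hw0)
          exact_mod_cast this
        nlinarith [hl0, hK0]
      have htrg : (k : ℝ) * (1 - 1 / Real.exp 1) * (1 - l - 1 / (k : ℝ))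
          = ((k:ℝ) - 1) * (1 - 1 / Real.exp 1) := by
        rw [hl00]
        field_simp
        ring
      have hLeq : (k : ℝ) - (w : ℝ) * (((k : ℝ) - 1) / k) ^ (k - w)
          - (((k - w : ℕ) : ℝ)) ^ 2 / k * (((k : ℝ) - 1) / k) ^ (k - w - 1)
          = (k:ℝ) - (k:ℝ) * (((k:ℝ) - 1) / k) ^ (k - 1) := by
        rw [hw0]
        norm_num
        rw [pow_two]
        field_simp
        simp
      rw [hLeq] at hE
      rw [htrg]
      linarith [analytic_zero k hk, hE]
    · have hw1 : 1 ≤ w := Nat.pos_of_ne_zero hw0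
      have hAP := analytic_pos k w hw1 hwk
      have hWl : (w:ℝ) ≤ l * (k:ℝ) + 1 := by
        rw [hwdef]
        have := Nat.ceil_lt_add_one (by positivity : (0:ℝ) ≤ l * (k:ℝ))
        linarith
      have hMge : (k:ℝ) - l * (k:ℝ) - 1 ≤ ((k - w : ℕ) : ℝ) := by
        rw [Nat.cast_sub hwk.le]
        linarith
      have htar : (k : ℝ) * (1 - 1 / Real.exp 1) * (1 - l - 1 / (k : ℝ))
          ≤ ((k - w : ℕ) : ℝ) * (1 - 1 / Real.exp 1) := by
        have e : (k : ℝ) * (1 - 1 / Real.exp 1) * (1 - l - 1 / (k : ℝ))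
            = (1 - 1 / Real.exp 1) * ((k:ℝ) - l * (k:ℝ) - 1) := by
          field_simp
        rw [e]
        calc (1 - 1 / Real.exp 1) * ((k:ℝ) - l * (k:ℝ) - 1)
            ≤ (1 - 1 / Real.exp 1) * ((k - w : ℕ) : ℝ) :=
              mul_le_mul_of_nonneg_left hMge hEfrac
          _ = ((k - w : ℕ) : ℝ) * (1 - 1 / Real.exp 1) := mul_comm _ _
      linarith [hE, hAP, htar]
  refine ⟨part1, ?_⟩
  rw [ge_iff_le, max_le_iff]
  refine ⟨?_, nonneg⟩
  by_cases hsum : l + 1 / (k:ℝ) ≤ 1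
  · exact part1 hsum
  · push_neg at hsum
    have h1 : (1:ℝ) - l - 1/(k:ℝ) ≤ 0 := by linarith
    have h2 : (0:ℝ) ≤ (k:ℝ) * (1 - 1 / Real.exp 1) := by
      apply mul_nonneg hK0.le hEfrac
    have h3 : (k : ℝ) * (1 - 1 / Real.exp 1) * (1 - l - 1 / (k : ℝ)) ≤ 0 :=
      mul_nonpos_of_nonneg_of_nonpos h2 h1
    linarith [nonneg]
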